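/- Let β > 0, z ∈ X a metric space, R > 0, and u : X → ℝ a non-positive function. Suppose for all x, y with d(x,y) ≤ 2R and dist(y, Y) ≥ 3R (for a fixed set Y with dist(z,Y) > 4R) the estimate u(x) ≤ e^{-βd(x,y)} u(y) - u(y)·(e^{-βr}/(1 - e^{-βr}))·(1 - e^{-βd(x,y)}) holds for all r < dist(y, Y). Then sup_{B_R(z)} u ≤ ((e^{Rβ} - 1)/(e^{3Rβ} - 1)) · inf_{B_R(z)} u. -/

import Mathlib

open Real Metric

theorem beta_harnack_nonpositive {X : Type*} [MetricSpace X]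
    (β R : ℝ) (hβ : 0 < β) (hR : 0 < R)
    (Y : Set X) (z : X) (hz : 4 * R < infDist z Y)
    (u : X → ℝ) (hupos : ∀ x : X, u x ≤ 0)
    (hslope : ∀ x y : X, dist x y ≤ 2 * R → 3 * R ≤ infDist y Y →
      ∀ r : ℝ, 0 < r → r < infDist y Y →
        u x ≤ Real.exp (-β * dist x y) * u y -
          u y * (Real.exp (-β * r) / (1 - Real.exp (-β * r))) *
            (1 - Real.exp (-β * dist x y))) :
    ∀ x ∈ ball z R, ∀ y ∈ ball z R,
      u x ≤ ((Real.exp (R * β) - 1) / (Real.exp (3 * R * β) - 1)) * u y := by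
  intro x hx y hy
  rw [mem_ball] at hx hy
  have hd : dist x y ≤ 2 * R := by
    have := dist_triangle x z y
    have := dist_comm z y
    linarith [dist_triangle x z y, hx.le, hy.le]
  have hY : 3 * R < infDist y Y := by
    have h1 : infDist z Y ≤ infDist y Y + dist z y := infDist_le_infDist_add_dist
    have h2 : dist z y < R := by rw [dist_comm]; exact hy
    linarith
  have h3R : (0:ℝ) < 3 * R := by linarith
  have key := hslope x y hd hY.le (3 * R) h3R hY
  set d := dist x y with hdd
  have hd0 : 0 ≤ d := dist_nonneg
  have hE3 : (1:ℝ) < Real.exp (3 * R * β) := by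
    rw [show (1:ℝ) = Real.exp 0 by simp]
    exact Real.exp_lt_exp.mpr (by positivity)
  have hD : 0 < Real.exp (3 * R * β) - 1 := by linarith
  have hfrac : Real.exp (-β * (3 * R)) / (1 - Real.exp (-β * (3 * R)))
      = 1 / (Real.exp (3 * R * β) - 1) := by
    rw [show -β * (3 * R) = -(3 * R * β) by ring, Real.exp_neg]
    have hne : Real.exp (3 * R * β) ≠ 0 := (Real.exp_pos _).ne'
    field_simp
  rw [hfrac] at key
  have hA : Real.exp (R * β) ≤ Real.exp (-β * d) * Real.exp (3 * R * β) := by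
    rw [← Real.exp_add, Real.exp_le_exp]
    nlinarith
  have huy := hupos y
  refine key.trans ?_
  rw [div_mul_eq_mul_div, le_div_iff₀ hD]
  have expand : (Real.exp (-β * d) * u y -
      u y * (1 / (Real.exp (3 * R * β) - 1)) * (1 - Real.exp (-β * d))) *
      (Real.exp (3 * R * β) - 1)
      = u y * (Real.exp (-β * d) * Real.exp (3 * R * β) - 1) := by
    linear_combination (-(u y * (1 - Real.exp (-β * d)))) * one_div_mul_cancel hD.ne'
  rw [expand]
  nlinarith [mul_le_mul_of_nonpos_left hA huy]
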